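/- For any probability distribution z = (z_0, ..., z_L) on {0,...,L} with all z_i > 0, define Θ(z) = −∑_{i=1}^{L} i z_i log(z_i / z_{i−1}). Then Θ(z) ≤ H(z), where H is Shannon entropy. -/

import Mathlib

open Finset

private lemma double_count (L : ℕ) (f : ℕ → ℝ) :
    ∑ i ∈ Finset.Icc 1 L, (i : ℝ) * f i =
      ∑ j ∈ Finset.Icc 1 L, ∑ i ∈ Finset.Icc j L, f i := by
  have h1 : ∀ j ∈ Finset.Icc 1 L, ∑ i ∈ Finset.Icc j L, f i
      = ∑ i ∈ Finset.Icc 1 L, if j ≤ i then f i else 0 := by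
    intro j hj
    rw [Finset.sum_ite, Finset.sum_const_zero, add_zero]
    congr 1
    ext i
    simp only [Finset.mem_filter, Finset.mem_Icc] at *
    omega
  rw [Finset.sum_congr rfl h1, Finset.sum_comm]
  apply Finset.sum_congr rfl
  intro i hi
  rw [Finset.sum_ite, Finset.sum_const_zero, add_zero, Finset.sum_const]
  have : Finset.filter (fun j => j ≤ i) (Finset.Icc 1 L) = Finset.Icc 1 i := by
    ext j
    simp only [Finset.mem_filter, Finset.mem_Icc] at *
    omega
  rw [this, Nat.card_Icc, Nat.add_sub_cancel, nsmul_eq_mul]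

/-- For a strictly positive probability vector `z_0, ..., z_L`,
`Θ(z) = -∑_{i=1}^L i z_i log(z_i / z_{i-1}) ≤ H(z)`. -/
theorem theta_le_entropy (L : ℕ) (z : ℕ → ℝ)
    (hz : ∀ i ≤ L, 0 < z i) (hzsum : ∑ i ∈ Finset.range (L + 1), z i = 1) :
    -∑ i ∈ Finset.Icc 1 L, (i : ℝ) * z i * Real.log (z i / z (i - 1)) ≤
      -∑ i ∈ Finset.range (L + 1), z i * Real.log (z i) := by
  classical
  set S : ℕ → ℝ := fun j => ∑ i ∈ Finset.Icc j L, z i with hSdef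
  have hznn : ∀ i ≤ L, (0:ℝ) ≤ z i := fun i hi => (hz i hi).le
  have hSpos : ∀ j ≤ L, 0 < S j := by
    intro j hj
    apply Finset.sum_pos
    · intro i hi; exact hz i (Finset.mem_Icc.mp hi).2
    · exact ⟨j, Finset.mem_Icc.mpr ⟨le_refl j, hj⟩⟩
  have hS0 : S 0 = 1 := by
    rw [hSdef, ← hzsum]
    apply Finset.sum_congr _ (fun _ _ => rfl)
    ext i; simp [Nat.lt_succ_iff]
  have hSsucc : ∀ j ≤ L, S j = z j + S (j + 1) := by
    intro j hj
    rw [hSdef]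
    simp only
    rw [Finset.Icc_eq_cons_Ioc hj, Finset.sum_cons, Finset.Icc_add_one_left_eq_Ioc]
  have hStop : S (L + 1) = 0 := by
    rw [hSdef]; simp
  have hzleS : ∀ j ≤ L, z j ≤ S j := by
    intro j hj
    exact Finset.single_le_sum (fun i hi => hznn i (Finset.mem_Icc.mp hi).2)
      (Finset.mem_Icc.mpr ⟨le_refl j, hj⟩)
  -- Step A: rewrite Θ as a double sum
  have stepA : -∑ i ∈ Finset.Icc 1 L, (i : ℝ) * z i * Real.log (z i / z (i - 1))
      = ∑ j ∈ Finset.Icc 1 L, ∑ i ∈ Finset.Icc j L, z i * Real.log (z (i - 1) / z i) := by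
    rw [← double_count]
    rw [← Finset.sum_neg_distrib]
    apply Finset.sum_congr rfl
    intro i hi
    simp only [Finset.mem_Icc] at hi
    have h1 : 0 < z i := hz i hi.2
    have h2 : 0 < z (i - 1) := hz (i - 1) (by omega)
    rw [Real.log_div h2.ne' h1.ne', Real.log_div h1.ne' h2.ne']
    ring
  -- Step B: Gibbs inequality on tails
  have stepB : ∀ j ∈ Finset.Icc 1 L, ∑ i ∈ Finset.Icc j L, z i * Real.log (z (i - 1) / z i)
      ≤ S j * Real.log (S (j - 1)) - S j * Real.log (S j) := by
    intro j hj
    simp only [Finset.mem_Icc] at hj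
    obtain ⟨hj1, hjL⟩ := hj
    have hSj := hSpos j hjL
    have hSj1 := hSpos (j - 1) (by omega)
    have hshift : ∑ i ∈ Finset.Icc j L, z (i - 1) ≤ S (j - 1) := by
      have heq : ∑ i ∈ Finset.Icc j L, z (i - 1)
          = ∑ i ∈ Finset.Icc (j - 1) (L - 1), z i := by
        apply Finset.sum_nbij' (fun i => i - 1) (fun i => i + 1) <;>
          intro a ha <;> simp only [Finset.mem_Icc] at * <;> omega
      rw [heq, hSdef]
      apply Finset.sum_le_sum_of_subset_of_nonneg
      · apply Finset.Icc_subset_Icc_right; omega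
      · intro i hi _; exact hznn i (Finset.mem_Icc.mp hi).2
    have key : ∀ i ∈ Finset.Icc j L, z i * Real.log (z (i - 1) / z i)
        ≤ (z (i - 1) * S j / S (j - 1) - z i)
          + z i * (Real.log (S (j - 1)) - Real.log (S j)) := by
      intro i hi
      simp only [Finset.mem_Icc] at hi
      have h1 : 0 < z i := hz i hi.2
      have h2 : 0 < z (i - 1) := hz (i - 1) (by omega)
      have hr : (0:ℝ) < z (i - 1) * S j / (z i * S (j - 1)) := by positivity
      have hlog : Real.log (z (i - 1) * S j / (z i * S (j - 1)))
          ≤ z (i - 1) * S j / (z i * S (j - 1)) - 1 :=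
        Real.log_le_sub_one_of_pos hr
      have hexp : Real.log (z (i - 1) / z i)
          = Real.log (z (i - 1) * S j / (z i * S (j - 1)))
            + (Real.log (S (j - 1)) - Real.log (S j)) := by
        rw [Real.log_div (mul_pos h2 hSj).ne' (mul_pos h1 hSj1).ne',
          Real.log_mul h2.ne' hSj.ne', Real.log_mul h1.ne' hSj1.ne',
          Real.log_div h2.ne' h1.ne']
        ring
      rw [hexp, mul_add]
      have : z i * Real.log (z (i - 1) * S j / (z i * S (j - 1)))
          ≤ z (i - 1) * S j / S (j - 1) - z i := by
        calc z i * Real.log (z (i - 1) * S j / (z i * S (j - 1)))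
            ≤ z i * (z (i - 1) * S j / (z i * S (j - 1)) - 1) :=
              mul_le_mul_of_nonneg_left hlog h1.le
          _ = z (i - 1) * S j / S (j - 1) - z i := by
              field_simp
      linarith
    have hsum_eq : ∑ i ∈ Finset.Icc j L, ((z (i - 1) * S j / S (j - 1) - z i)
          + z i * (Real.log (S (j - 1)) - Real.log (S j)))
        = (∑ i ∈ Finset.Icc j L, z (i - 1)) * (S j / S (j - 1)) - S j
          + S j * (Real.log (S (j - 1)) - Real.log (S j)) := by
      simp only [mul_div_assoc]
      rw [Finset.sum_add_distrib, Finset.sum_sub_distrib, ← Finset.sum_mul, ← Finset.sum_mul]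
    have hmul : (∑ i ∈ Finset.Icc j L, z (i - 1)) * (S j / S (j - 1)) ≤ S j := by
      calc (∑ i ∈ Finset.Icc j L, z (i - 1)) * (S j / S (j - 1))
          ≤ S (j - 1) * (S j / S (j - 1)) :=
            mul_le_mul_of_nonneg_right hshift (by positivity)
        _ = S j := by field_simp
    calc ∑ i ∈ Finset.Icc j L, z i * Real.log (z (i - 1) / z i)
        ≤ ∑ i ∈ Finset.Icc j L, ((z (i - 1) * S j / S (j - 1) - z i)
            + z i * (Real.log (S (j - 1)) - Real.log (S j))) :=
          Finset.sum_le_sum key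
      _ = (∑ i ∈ Finset.Icc j L, z (i - 1)) * (S j / S (j - 1)) - S j
            + S j * (Real.log (S (j - 1)) - Real.log (S j)) := hsum_eq
      _ ≤ S j - S j + S j * (Real.log (S (j - 1)) - Real.log (S j)) := by linarith
      _ = S j * Real.log (S (j - 1)) - S j * Real.log (S j) := by ring
  -- Step C: telescoping bound
  have stepC : ∀ j ∈ Finset.Icc 1 L,
      S j * Real.log (S (j - 1)) - S j * Real.log (S j)
      ≤ -(z j * Real.log (z j))
        + (S j * Real.log (S (j - 1)) - S (j + 1) * Real.log (S j)) := by
    intro j hj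
    simp only [Finset.mem_Icc] at hj
    obtain ⟨hj1, hjL⟩ := hj
    have h1 : z j * Real.log (z j) ≤ z j * Real.log (S j) :=
      mul_le_mul_of_nonneg_left (Real.log_le_log (hz j hjL) (hzleS j hjL)) (hznn j hjL)
    have h2 := hSsucc j hjL
    have h3 : S j * Real.log (S j) = z j * Real.log (S j) + S (j + 1) * Real.log (S j) := by
      rw [h2]; ring
    linarith
  have telescope : ∑ j ∈ Finset.Icc 1 L,
      (S j * Real.log (S (j - 1)) - S (j + 1) * Real.log (S j)) = 0 := by
    have heq : ∑ j ∈ Finset.Icc 1 L,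
        (S j * Real.log (S (j - 1)) - S (j + 1) * Real.log (S j))
        = ∑ j ∈ Finset.range L,
          (S (j + 1) * Real.log (S j) - S (j + 2) * Real.log (S (j + 1))) := by
      apply Finset.sum_nbij' (fun i => i - 1) (fun i => i + 1) <;>
        intro a ha <;> simp only [Finset.mem_Icc, Finset.mem_range] at *
      · omega
      · omega
      · omega
      · omega
      · have : a - 1 + 1 = a := by omega
        have h2 : a - 1 + 2 = a + 1 := by omega
        rw [this, h2]
    rw [heq]
    rw [Finset.sum_range_sub' (fun j => S (j + 1) * Real.log (S j)) L]
    rw [hS0, hStop]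
    simp
  -- combine
  rw [stepA]
  calc ∑ j ∈ Finset.Icc 1 L, ∑ i ∈ Finset.Icc j L, z i * Real.log (z (i - 1) / z i)
      ≤ ∑ j ∈ Finset.Icc 1 L, (S j * Real.log (S (j - 1)) - S j * Real.log (S j)) :=
        Finset.sum_le_sum stepB
    _ ≤ ∑ j ∈ Finset.Icc 1 L, (-(z j * Real.log (z j))
          + (S j * Real.log (S (j - 1)) - S (j + 1) * Real.log (S j))) :=
        Finset.sum_le_sum stepC
    _ = -∑ j ∈ Finset.Icc 1 L, z j * Real.log (z j) := by
        rw [Finset.sum_add_distrib, telescope, add_zero, Finset.sum_neg_distrib]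
    _ ≤ -∑ i ∈ Finset.range (L + 1), z i * Real.log (z i) := by
        have hsplit : ∑ i ∈ Finset.range (L + 1), z i * Real.log (z i)
            = z 0 * Real.log (z 0) + ∑ j ∈ Finset.Icc 1 L, z j * Real.log (z j) := by
          rw [Finset.range_eq_Ico]
          rw [show Finset.Ico 0 (L + 1) = Finset.Icc 0 L by
            ext i; simp [Nat.lt_succ_iff]]
          rw [Finset.Icc_eq_cons_Ioc (Nat.zero_le L), Finset.sum_cons, ← Finset.Icc_add_one_left_eq_Ioc, zero_add]
        have hz0 : z 0 ≤ 1 := by rw [← hS0]; exact hzleS 0 (Nat.zero_le L)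
        have : z 0 * Real.log (z 0) ≤ 0 :=
          mul_nonpos_of_nonneg_of_nonpos (hznn 0 (Nat.zero_le L))
            (Real.log_nonpos (hznn 0 (Nat.zero_le L)) hz0)
        rw [hsplit]
        linarith
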